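/- Let A be a DFA obtained by coloring a 1-outregular spanning subgraph R of a strongly connected uniform-outdegree digraph with color α, where R has exactly one maximal tree T with root r on a cycle H, and all vertices of maximal level L lie in T. If p is a vertex of maximal level L, then for every F-clique F, the states pα^{L-1} and pα^{L-1+|H|} cannot both lie outside any common synchronization, i.e., the pair (pα^{L-1}, pα^{L+|H|-1}) cannot be a deadlock (it is a stable pair). -/
import Mathlib


def Adj {V : Type*} (E : V → Multiset V) (p q : V) : Prop := q ∈ E p

def StronglyConnected {V : Type*} (E : V → Multiset V) : Prop :=
  ∀ p q : V, Relation.ReflTransGen (Adj E) p q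

def HasCycle {V : Type*} (E : V → Multiset V) (n : ℕ) : Prop :=
  0 < n ∧ ∃ c : ZMod n → V, ∀ i, c (i + 1) ∈ E (c i)

def CycleGcd {V : Type*} (E : V → Multiset V) (k : ℕ) : Prop :=
  (∀ n, HasCycle E n → k ∣ n) ∧ ∀ m, (∀ n, HasCycle E n → m ∣ n) → m ∣ k

def IsColoring {V : Type*} {d : ℕ} (E : V → Multiset V) (δ : V → Fin d → V) : Prop :=
  ∀ v, (List.ofFn (δ v) : Multiset V) = E v

def run {V A : Type*} (δ : V → A → V) (p : V) (s : List A) : V :=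
  s.foldl δ p

def wordImage {V A : Type*} [Fintype V] [DecidableEq V] (δ : V → A → V) (s : List A) : Finset V :=
  Finset.univ.image (fun p => run δ p s)

def IsPathLen {V : Type*} (E : V → Multiset V) (p q : V) (n : ℕ) : Prop :=
  ∃ c : Fin (n + 1) → V, c 0 = p ∧ c (Fin.last n) = q ∧
    ∀ i : Fin n, c i.succ ∈ E (c i.castSucc)

def SyncPair {V A : Type*} (δ : V → A → V) (p q : V) : Prop :=
  ∃ s : List A, run δ p s = run δ q s

def StablePair {V A : Type*} (δ : V → A → V) (p q : V) : Prop :=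
  ∀ u : List A, SyncPair δ (run δ p u) (run δ q u)

def DeadlockPair {V A : Type*} (δ : V → A → V) (p q : V) : Prop :=
  ∀ s : List A, run δ p s ≠ run δ q s

def IsFClique {V A : Type*} [Fintype V] [DecidableEq V] (δ : V → A → V) (F : Finset V) : Prop :=
  (∀ p ∈ F, ∀ q ∈ F, p ≠ q → DeadlockPair δ p q) ∧
  ∀ G : Finset V, (∀ p ∈ G, ∀ q ∈ G, p ≠ q → DeadlockPair δ p q) → G.card ≤ F.card

noncomputable def levelOf {V : Type*} (f : V → V) (v : V) : ℕ :=
  sInf {n | ∃ m, 0 < m ∧ f^[m] (f^[n] v) = f^[n] v}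

noncomputable def rootOf {V : Type*} (f : V → V) (v : V) : V := f^[levelOf f v] v

noncomputable def maxLevel {V : Type*} [Fintype V] (f : V → V) : ℕ :=
  Finset.univ.sup (levelOf f)

def UniqueMaxTree {V : Type*} [Fintype V] (f : V → V) : Prop :=
  0 < maxLevel f ∧ ∃ r : V, ∀ v : V, levelOf f v = maxLevel f → rootOf f v = r

def HasCycleIn {V : Type*} (E : V → Multiset V) (S : Finset V) (n : ℕ) : Prop :=
  0 < n ∧ ∃ c : ZMod n → V, (∀ i, c i ∈ S) ∧ ∀ i, c (i + 1) ∈ E (c i)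

def CycleGcdIn {V : Type*} (E : V → Multiset V) (S : Finset V) (k : ℕ) : Prop :=
  (∀ n, HasCycleIn E S n → k ∣ n) ∧ ∀ m, (∀ n, HasCycleIn E S n → m ∣ n) → m ∣ k

section Helpers

open Function

lemma run_append' {V A : Type*} (δ : V → A → V) (p : V) (u v : List A) :
    run δ p (u ++ v) = run δ (run δ p u) v := by simp [run]

lemma run_replicate {V : Type*} {d : ℕ} (δ : V → Fin d → V) (α : Fin d) (f : V → V)
    (hf : ∀ v, δ v α = f v) : ∀ (n : ℕ) (p : V),
    run δ p (List.replicate n α) = f^[n] p := by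
  intro n
  induction n with
  | zero => intro p; rfl
  | succ n ih =>
    intro p
    rw [List.replicate_succ]
    show run δ (δ p α) (List.replicate n α) = _
    rw [ih, hf, Function.iterate_succ_apply]

lemma deadlock_push {V A : Type*} (δ : V → A → V) {a b : V} (h : DeadlockPair δ a b)
    (u : List A) : DeadlockPair δ (run δ a u) (run δ b u) := by
  intro s hs
  exact h (u ++ s) (by rwa [run_append', run_append'])

lemma deadlock_ne {V A : Type*} {δ : V → A → V} {a b : V} (h : DeadlockPair δ a b) :
    a ≠ b := h []

lemma deadlock_symm {V A : Type*} {δ : V → A → V} {a b : V} (h : DeadlockPair δ a b) :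
    DeadlockPair δ b a := fun s hs => h s hs.symm

lemma levelSet_nonempty {V : Type*} [Fintype V] (f : V → V) (v : V) :
    {n | ∃ m, 0 < m ∧ f^[m] (f^[n] v) = f^[n] v}.Nonempty := by
  obtain ⟨a, b, hab, he⟩ := Fintype.exists_ne_map_eq_of_card_lt
    (fun i : Fin (Fintype.card V + 1) => f^[(i : ℕ)] v) (by simp)
  rcases Nat.lt_or_ge (a : ℕ) (b : ℕ) with hlt | hge
  · refine ⟨a, (b : ℕ) - a, by omega, ?_⟩
    rw [← Function.iterate_add_apply, show (b : ℕ) - a + a = b from by omega, ← he]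
  · have hlt : (b : ℕ) < a := by
      rcases Nat.lt_or_ge (b : ℕ) (a : ℕ) with h | h
      · exact h
      · exact absurd (Fin.ext (by omega)) hab
    refine ⟨b, (a : ℕ) - b, by omega, ?_⟩
    rw [← Function.iterate_add_apply, show (a : ℕ) - b + b = a from by omega, he]

lemma mem_levelSet_of_le {V : Type*} (f : V → V) (v : V) {n k : ℕ}
    (h : ∃ m, 0 < m ∧ f^[m] (f^[n] v) = f^[n] v) (hk : n ≤ k) :
    ∃ m, 0 < m ∧ f^[m] (f^[k] v) = f^[k] v := by
  obtain ⟨m, hm, he⟩ := h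
  obtain ⟨j, rfl⟩ := Nat.exists_eq_add_of_le hk
  refine ⟨m, hm, ?_⟩
  rw [show n + j = j + n from by omega, Function.iterate_add_apply,
    ← Function.iterate_add_apply f m j, show m + j = j + m from by omega,
    Function.iterate_add_apply, he]

lemma levelOf_le_iff {V : Type*} [Fintype V] (f : V → V) (v : V) (n : ℕ) :
    levelOf f v ≤ n ↔ ∃ m, 0 < m ∧ f^[m] (f^[n] v) = f^[n] v := by
  constructor
  · intro h
    exact mem_levelSet_of_le f v (Nat.sInf_mem (levelSet_nonempty f v)) h
  · intro h
    exact Nat.sInf_le h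

lemma levelOf_iterate {V : Type*} [Fintype V] (f : V → V) (v : V) (n : ℕ) :
    levelOf f (f^[n] v) = levelOf f v - n := by
  apply le_antisymm
  · rw [levelOf_le_iff]
    have h0 : ∃ m, 0 < m ∧ f^[m] (f^[levelOf f v] v) = f^[levelOf f v] v :=
      Nat.sInf_mem (levelSet_nonempty f v)
    have h1 := mem_levelSet_of_le f v h0 (show levelOf f v ≤ (levelOf f v - n) + n from by omega)
    rwa [Function.iterate_add_apply] at h1
  · have h0 : ∃ m, 0 < m ∧ f^[m] (f^[levelOf f (f^[n] v)] (f^[n] v))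
      = f^[levelOf f (f^[n] v)] (f^[n] v) := Nat.sInf_mem (levelSet_nonempty f (f^[n] v))
    rw [← Function.iterate_add_apply] at h0
    have := Nat.sInf_le (s := {k | ∃ m, 0 < m ∧ f^[m] (f^[k] v) = f^[k] v}) h0
    have h2 : levelOf f v ≤ levelOf f (f^[n] v) + n := this
    omega

lemma levelOf_eq_zero_iff {V : Type*} [Fintype V] (f : V → V) (v : V) :
    levelOf f v = 0 ↔ ∃ m, 0 < m ∧ f^[m] v = v := by
  rw [← Nat.le_zero, levelOf_le_iff]
  simp

lemma iterate_factorial_fixed {V : Type*} [Fintype V] (f : V → V) (v : V)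
    (h : ∃ m, 0 < m ∧ f^[m] v = v) : f^[Nat.factorial (Fintype.card V)] v = v := by
  classical
  set m := Nat.find h with hmdef
  obtain ⟨hm0, hmv⟩ : 0 < m ∧ f^[m] v = v := Nat.find_spec h
  have key : ∀ i j : ℕ, i < j → j < m → f^[i] v = f^[j] v → False := by
    intro i j hij hjm he
    have h1 : f^[m - j + i] v = v := by
      rw [Function.iterate_add_apply, he, ← Function.iterate_add_apply,
        show m - j + j = m from by omega, hmv]
    exact Nat.find_min h (m := m - j + i) (by omega) ⟨by omega, h1⟩
  have hinj : Function.Injective (fun i : Fin m => f^[(i : ℕ)] v) := by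
    intro i j hij
    by_contra hne
    rcases Nat.lt_or_ge (i : ℕ) (j : ℕ) with h1 | h1
    · exact key i j h1 j.isLt hij
    · have h2 : (j : ℕ) < i := by
        rcases Nat.lt_or_ge (j : ℕ) (i : ℕ) with h | h
        · exact h
        · exact absurd (Fin.ext (by omega)) hne
      exact key j i h2 i.isLt hij.symm
  have hcard : m ≤ Fintype.card V := by
    simpa using Fintype.card_le_of_injective _ hinj
  obtain ⟨c, hc⟩ := Nat.dvd_factorial hm0 hcard
  rw [hc, Function.iterate_mul]
  exact Function.iterate_fixed hmv c

def DClique {V A : Type*} (δ : V → A → V) (F : Finset V) : Prop :=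
  ∀ p ∈ F, ∀ q ∈ F, p ≠ q → DeadlockPair δ p q

lemma exists_max_clique {V A : Type*} [Fintype V] [DecidableEq V] (δ : V → A → V) :
    ∃ F : Finset V, DClique δ F ∧ ∀ G : Finset V, DClique δ G → G.card ≤ F.card := by
  classical
  set S : Set ℕ := {n | ∃ F : Finset V, DClique δ F ∧ F.card = n} with hS
  have hne : S.Nonempty := ⟨0, ∅, by intro p hp; simp at hp, by simp⟩
  have hbdd : BddAbove S := by
    refine ⟨Fintype.card V, ?_⟩
    rintro n ⟨F, _, rfl⟩
    exact Finset.card_le_univ F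
  obtain ⟨F, hF, hcard⟩ := Nat.sSup_mem hne hbdd
  refine ⟨F, hF, fun G hG => ?_⟩
  rw [hcard]
  exact le_csSup hbdd ⟨G, hG, rfl⟩

lemma DClique_image {V A : Type*} [Fintype V] [DecidableEq V] {δ : V → A → V}
    {F : Finset V} (hF : DClique δ F) (w : List A) :
    DClique δ (F.image (fun x => run δ x w)) ∧
      (F.image (fun x => run δ x w)).card = F.card := by
  constructor
  · rintro a ha b hb hab
    obtain ⟨x, hx, rfl⟩ := Finset.mem_image.mp ha
    obtain ⟨y, hy, rfl⟩ := Finset.mem_image.mp hb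
    have hxy : x ≠ y := by rintro rfl; exact hab rfl
    exact deadlock_push δ (hF x hx y hy hxy) w
  · apply Finset.card_image_of_injOn
    intro x hx y hy hxy
    by_contra hne
    exact hF x hx y hy hne w hxy

end Helpers

lemma exists_word {V : Type*} {d : ℕ} {E : V → Multiset V} {δ : V → Fin d → V}
    (hδ : IsColoring E δ) {g q : V} (h : Relation.ReflTransGen (Adj E) g q) :
    ∃ w : List (Fin d), run δ g w = q := by
  induction h with
  | refl => exact ⟨[], rfl⟩
  | @tail b c h1 h2 ih =>
    obtain ⟨w, hw⟩ := ih
    have hmem : c ∈ (List.ofFn (δ b) : Multiset V) := by rw [hδ b]; exact h2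
    rw [Multiset.mem_coe, List.mem_ofFn] at hmem
    obtain ⟨i, hi⟩ := hmem
    refine ⟨w ++ [i], ?_⟩
    rw [run_append', hw]
    simpa [run] using hi

/-- if the spanning subgraph of color α has exactly one maximal tree
with maximal level L and the root lies on an α-cycle of length |H|, then for a
vertex p of maximal level the pair (pα^{L-1}, pα^{L-1+|H|}) is stable. -/
theorem stmt17 {V : Type*} [Fintype V] [DecidableEq V] {d : ℕ}
    (E : V → Multiset V)
    (hsc : StronglyConnected E)
    (δ : V → Fin d → V) (hδ : IsColoring E δ)
    (α : Fin d) (f : V → V) (hf : ∀ v, δ v α = f v)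
    (humt : UniqueMaxTree f)
    (p : V) (hp : levelOf f p = maxLevel f)
    (r : V) (hr : rootOf f p = r)
    (H : ℕ) (hH : H = sInf {mm | 0 < mm ∧ f^[mm] r = r}) :
    StablePair δ (run δ p (List.replicate (maxLevel f - 1) α))
      (run δ p (List.replicate (maxLevel f - 1 + H) α)) := by
  classical
  have hL1 : 0 < maxLevel f := humt.1
  intro u
  by_contra hnot
  set q1 := run δ p (List.replicate (maxLevel f - 1) α) with hq1def
  set q2 := run δ p (List.replicate (maxLevel f - 1 + H) α) with hq2def
  have hdead : DeadlockPair δ (run δ q1 u) (run δ q2 u) := fun s hs => hnot ⟨s, hs⟩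
  obtain ⟨l, hl⟩ : ∃ l, maxLevel f = l + 1 := ⟨maxLevel f - 1, by omega⟩
  have hq1 : q1 = f^[l] p := by
    rw [hq1def, run_replicate δ α f hf, hl, Nat.add_sub_cancel]
  have hq2 : q2 = f^[l + H] p := by
    rw [hq2def, run_replicate δ α f hf, hl, Nat.add_sub_cancel]
  -- root facts
  have hrootp : f^[maxLevel f] p = r := by
    have h1 : rootOf f p = f^[maxLevel f] p := by rw [rootOf, hp]
    rw [← h1, hr]
  have hrper : ∃ m, 0 < m ∧ f^[m] r = r := by
    have h0 : ∃ m, 0 < m ∧ f^[m] (f^[levelOf f p] p) = f^[levelOf f p] p :=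
      Nat.sInf_mem (levelSet_nonempty f p)
    rwa [hp, hrootp] at h0
  have hHmem : 0 < H ∧ f^[H] r = r := by rw [hH]; exact Nat.sInf_mem hrper
  obtain ⟨e, he⟩ : ∃ e, H = e + 1 := ⟨H - 1, by omega⟩
  have hq2r : q2 = f^[e] r := by
    rw [hq2, he, show l + (e + 1) = e + (l + 1) from by omega,
      Function.iterate_add_apply, ← hl, hrootp]
  have hlevq1 : levelOf f q1 = 1 := by
    rw [hq1, levelOf_iterate, hp]; omega
  -- maximal clique containing p
  obtain ⟨F₀, hF₀clique, hmax⟩ := exists_max_clique (V := V) δ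
  have hone : DClique δ ({p} : Finset V) := by
    intro a ha b hb hab
    simp only [Finset.mem_singleton] at ha hb
    exact absurd (ha.trans hb.symm) hab
  have hM1 : 1 ≤ F₀.card := by simpa using hmax {p} hone
  obtain ⟨g, hg⟩ := Finset.card_pos.mp (show 0 < F₀.card by omega)
  obtain ⟨w, hw⟩ := exists_word hδ (hsc g p)
  set F := F₀.image (fun x => run δ x w) with hF
  obtain ⟨hFclique, hFcard⟩ := DClique_image hF₀clique w
  have hpF : p ∈ F := hw ▸ Finset.mem_image_of_mem _ hg
  -- the clique A = F α^{L-1}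
  set A := F.image (fun x => run δ x (List.replicate l α)) with hA
  obtain ⟨hAclique, hAcard⟩ := DClique_image hFclique (List.replicate l α)
  have hq1A : q1 ∈ A :=
    Finset.mem_image.mpr ⟨p, hpF, by rw [run_replicate δ α f hf, ← hq1]⟩
  -- every other element of A is periodic
  have hkey : ∀ a ∈ A, a ≠ q1 → ∃ m, 0 < m ∧ f^[m] a = a := by
    intro a ha hne
    obtain ⟨v, hvF, hva⟩ := Finset.mem_image.mp ha
    rw [run_replicate δ α f hf] at hva
    have hvp : v ≠ p := by rintro rfl; exact hne (by rw [← hva, hq1])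
    have hvlev : levelOf f v ≤ l := by
      by_contra hgt
      have hle : levelOf f v ≤ maxLevel f := Finset.le_sup (Finset.mem_univ v)
      have hvL : levelOf f v = maxLevel f := by omega
      obtain ⟨r', hr'⟩ := humt.2
      have h1 : rootOf f v = r := by rw [hr' v hvL, ← hr' p hp, hr]
      have h2 : f^[maxLevel f] v = r := by
        have : rootOf f v = f^[maxLevel f] v := by rw [rootOf, hvL]
        rw [← this, h1]
      exact hFclique v hvF p hpF hvp (List.replicate (maxLevel f) α)
        (by rw [run_replicate δ α f hf, run_replicate δ α f hf, h2, hrootp])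
    have hlev0 : levelOf f a = 0 := by
      rw [← hva, levelOf_iterate]; omega
    exact (levelOf_eq_zero_iff f a).mp hlev0
  -- the long word α^k fixes periodic points and maps q1 to q2
  set fact := Nat.factorial (Fintype.card V) with hfactdef
  have hfactpos : 0 < fact := Nat.factorial_pos _
  set k := H * fact with hk
  have hkq1 : f^[k] q1 = q2 := by
    obtain ⟨t, ht⟩ : ∃ t, fact = t + 1 := ⟨fact - 1, by omega⟩
    have hidx : k + l = (e + (e + 1) * t) + (l + 1) := by rw [hk, he, ht]; ring
    have hper : f^[(e + 1) * t] r = r := by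
      rw [← he, Function.iterate_mul]
      exact Function.iterate_fixed hHmem.2 t
    rw [hq1, ← Function.iterate_add_apply, hidx, Function.iterate_add_apply,
      ← hl, hrootp, Function.iterate_add_apply, hper, hq2r]
  have hcq2 : ∀ c ∈ A, c ≠ q1 → DeadlockPair δ c q2 := by
    intro c hc hne
    have hfix : f^[k] c = c := by
      have h1 : f^[fact] c = c := iterate_factorial_fixed f c (hkey c hc hne)
      rw [hk, mul_comm, Function.iterate_mul]
      exact Function.iterate_fixed h1 H
    have hd := deadlock_push δ (hAclique c hc q1 hq1A hne) (List.replicate k α)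
    rwa [run_replicate δ α f hf, run_replicate δ α f hf, hfix, hkq1] at hd
  -- build the too-large clique
  set C := (A.erase q1).image (fun x => run δ x u) with hC
  set d1 := run δ q1 u with hd1
  set d2 := run δ q2 u with hd2
  have hmemC : ∀ x ∈ C, ∃ c ∈ A.erase q1, run δ c u = x := fun x hx =>
    Finset.mem_image.mp hx
  have hcd1 : ∀ c ∈ A.erase q1, DeadlockPair δ (run δ c u) d1 := by
    intro c hcer
    exact deadlock_push δ
      (hAclique c (Finset.mem_of_mem_erase hcer) q1 hq1A (Finset.ne_of_mem_erase hcer)) u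
  have hcd2 : ∀ c ∈ A.erase q1, DeadlockPair δ (run δ c u) d2 := by
    intro c hcer
    exact deadlock_push δ
      (hcq2 c (Finset.mem_of_mem_erase hcer) (Finset.ne_of_mem_erase hcer)) u
  have hd1C : d1 ∉ C := by
    intro hmem
    obtain ⟨c, hcer, hcu⟩ := hmemC d1 hmem
    exact deadlock_ne (hcd1 c hcer) hcu
  have hd2C : d2 ∉ C := by
    intro hmem
    obtain ⟨c, hcer, hcu⟩ := hmemC d2 hmem
    exact deadlock_ne (hcd2 c hcer) hcu
  have hd12 : d1 ≠ d2 := deadlock_ne hdead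
  set G := insert d1 (insert d2 C) with hG
  have hGclique : DClique δ G := by
    intro x hx y hy hxy
    simp only [hG, Finset.mem_insert] at hx hy
    rcases hx with rfl | rfl | hx
    · rcases hy with rfl | rfl | hy
      · exact absurd rfl hxy
      · exact hdead
      · obtain ⟨c, hcer, rfl⟩ := hmemC y hy
        exact deadlock_symm (hcd1 c hcer)
    · rcases hy with rfl | rfl | hy
      · exact deadlock_symm hdead
      · exact absurd rfl hxy
      · obtain ⟨c, hcer, rfl⟩ := hmemC y hy
        exact deadlock_symm (hcd2 c hcer)
    · obtain ⟨c, hcer, rfl⟩ := hmemC x hx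
      rcases hy with rfl | rfl | hy
      · exact hcd1 c hcer
      · exact hcd2 c hcer
      · obtain ⟨c', hcer', rfl⟩ := hmemC y hy
        have hcc : c ≠ c' := by rintro rfl; exact hxy rfl
        exact deadlock_push δ
          (hAclique c (Finset.mem_of_mem_erase hcer) c' (Finset.mem_of_mem_erase hcer') hcc) u
  -- cardinality contradiction
  have hCcard : C.card = A.card - 1 := by
    rw [hC, Finset.card_image_of_injOn, Finset.card_erase_of_mem hq1A]
    intro x hx y hy hxy
    by_contra hne
    exact hAclique x (Finset.mem_of_mem_erase hx) y (Finset.mem_of_mem_erase hy) hne u hxy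
  have hAc : A.card = F₀.card := by rw [hAcard, hFcard]
  have hGcard : G.card = F₀.card + 1 := by
    rw [hG, Finset.card_insert_of_notMem (by simp [hd12, hd1C]),
      Finset.card_insert_of_notMem hd2C, hCcard, hAc]
    omega
  have := hmax G hGclique
  omega
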